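/- arXiv:1806.00108 — 3 statements merged into one kernel-verified Lean document; each statement's English description precedes it below -/
import Mathlib

section
/- The abelian group presented by generators x̄₀, x̄₁, ȳ₀, ȳ₁ with relations 2ȳ₀ = x̄₀ + x̄₁ and 2ȳ₁ = 2x̄₁ is isomorphic to ℤ² ⊕ ℤ/2ℤ. -/
/-- The free abelian group on the four generators `x̄₀, x̄₁, ȳ₀, ȳ₁`
(coordinates `0, 1, 2, 3`). -/
abbrev V : Type := Fin 4 → ℤ

/-- The relation `2ȳ₀ = x̄₀ + x̄₁`. -/
def r1 : V := 2 • Pi.single 2 1 - Pi.single 0 1 - Pi.single 1 1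

/-- The relation `2ȳ₁ = 2x̄₁`. -/
def r2 : V := 2 • Pi.single 3 1 - 2 • Pi.single 1 1

/-- The subgroup of relations. -/
def R : AddSubgroup V := AddSubgroup.closure {r1, r2}

/-- The map to the normal form. -/
def phi : V →+ ℤ × ℤ × ZMod 2 where
  toFun v := (v 0 + v 1 + v 2 + v 3, -v 0 + v 1 + v 3, ((v 3 : ℤ) : ZMod 2))
  map_zero' := by simp
  map_add' a b := by
    simp only [Pi.add_apply, Prod.mk_add_mk, Prod.mk.injEq]
    refine ⟨by ring, by ring, by push_cast; ring⟩

lemma r1_mem_ker : phi r1 = 0 := by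
  simp [phi, r1, Pi.single_apply]

lemma r2_mem_ker : phi r2 = 0 := by
  simp [phi, r2, Pi.single_apply]
  decide

lemma R_le_ker : R ≤ phi.ker := by
  rw [R, AddSubgroup.closure_le]
  rintro x (rfl | rfl)
  · exact r1_mem_ker
  · exact r2_mem_ker

lemma mem_R_of_phi_eq_zero (v : V) (h : phi v = 0) : v ∈ R := by
  have h1 : v 0 + v 1 + v 2 + v 3 = 0 := congrArg Prod.fst h
  have h2 : -v 0 + v 1 + v 3 = 0 := congrArg (Prod.fst ∘ Prod.snd) h
  have h3 : ((v 3 : ℤ) : ZMod 2) = 0 := congrArg (Prod.snd ∘ Prod.snd) h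
  have h4 : (2 : ℤ) ∣ v 3 := by
    have := (ZMod.intCast_zmod_eq_zero_iff_dvd (v 3) 2).mp h3
    exact_mod_cast this
  obtain ⟨k, hk⟩ := h4
  have hv : v = (-(v 0)) • r1 + k • r2 := by
    funext i
    have e1 : r1 = ![-1, -1, 2, 0] := by
      funext i; fin_cases i <;> rfl
    have e2 : r2 = ![0, -2, 0, 2] := by
      funext i; fin_cases i <;> rfl
    fin_cases i <;> simp [e1, e2] <;> omega
  rw [hv]
  have hr1 : r1 ∈ R := AddSubgroup.subset_closure (by simp)
  have hr2 : r2 ∈ R := AddSubgroup.subset_closure (by simp)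
  exact R.add_mem (R.zsmul_mem hr1 _) (R.zsmul_mem hr2 _)

lemma phi_surjective : Function.Surjective phi := by
  rintro ⟨m, n, t⟩
  refine ⟨![0, n - (t.val : ℤ), m - n, (t.val : ℤ)], ?_⟩
  simp only [phi, AddMonoidHom.coe_mk, ZeroHom.coe_mk]
  refine Prod.ext (by simp; try ring) (Prod.ext (by simp; try ring) ?_)
  simp [ZMod.natCast_val, ZMod.cast_id]

theorem stmt_11 : Nonempty ((V ⧸ R) ≃+ (ℤ × ℤ × ZMod 2)) := by
  let f : (V ⧸ R) →+ ℤ × ℤ × ZMod 2 := QuotientAddGroup.lift R phi R_le_ker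
  have hinj : Function.Injective f := by
    rw [injective_iff_map_eq_zero]
    intro x hx
    induction x using QuotientAddGroup.induction_on with
    | H v =>
      rw [QuotientAddGroup.eq_zero_iff]
      exact mem_R_of_phi_eq_zero v hx
  have hsurj : Function.Surjective f := fun y => by
    obtain ⟨v, hv⟩ := phi_surjective y
    exact ⟨QuotientAddGroup.mk v, hv⟩
  exact ⟨AddEquiv.ofBijective f ⟨hinj, hsurj⟩⟩
end

section
/- In the group G with presentation ⟨x_i, y_i (i ≥ 0) | x_j x_i = x_i x_{j+1}, x_j y_i = y_i x_{j+1}, y_j x_i = x_i y_{j+1}, y_j y_i = y_i y_{j+1} (for 0 ≤ i < j), y_i² = x_i x_{i+1} (for i ≥ 0)⟩, every generator x_n with n ≥ 2 satisfies x_n = x_0^{-(n-1)} x_1 x_0^{n-1}, and similarly y_n = x_0^{-(n-1)} y_1 x_0^{n-1}; hence G is generated by x_0, x_1, y_0, y_1. -/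
theorem stmt_12 (G : Type*) [Group G] (x y : ℕ → G)
    (hxx : ∀ i j, i < j → x j * x i = x i * x (j + 1))
    (hxy : ∀ i j, i < j → x j * y i = y i * x (j + 1))
    (hyx : ∀ i j, i < j → y j * x i = x i * y (j + 1))
    (hyy : ∀ i j, i < j → y j * y i = y i * y (j + 1))
    (hy2 : ∀ i, y i ^ 2 = x i * x (i + 1)) :
    (∀ n, 2 ≤ n →
      x n = (x 0)⁻¹ ^ (n - 1) * x 1 * x 0 ^ (n - 1) ∧
      y n = (x 0)⁻¹ ^ (n - 1) * y 1 * x 0 ^ (n - 1)) ∧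
    (Subgroup.closure (Set.range x ∪ Set.range y) = ⊤ →
      Subgroup.closure {x 0, x 1, y 0, y 1} = ⊤) := by
  have key : ∀ n, 2 ≤ n →
      x n = (x 0)⁻¹ ^ (n - 1) * x 1 * x 0 ^ (n - 1) ∧
      y n = (x 0)⁻¹ ^ (n - 1) * y 1 * x 0 ^ (n - 1) := by
    intro n hn
    induction n, hn using Nat.le_induction with
    | base =>
      constructor
      · have h := hxx 0 1 (by norm_num)
        simp only [show 2-1=1 from rfl, pow_one]
        rw [mul_assoc, eq_inv_mul_iff_mul_eq, h]
      · have h := hyx 0 1 (by norm_num)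
        simp only [show 2-1=1 from rfl, pow_one]
        rw [mul_assoc, eq_inv_mul_iff_mul_eq, h]
    | succ n hn ih =>
      obtain ⟨ihx, ihy⟩ := ih
      have h1 : 1 ≤ n := by omega
      have hs : n + 1 - 1 = (n - 1) + 1 := by omega
      constructor
      · have h := hxx 0 n (by omega)
        have : x (n + 1) = (x 0)⁻¹ * x n * x 0 := by
          rw [mul_assoc, h]; group
        rw [this, ihx, hs, pow_succ, pow_succ']
        group
      · have h := hyx 0 n (by omega)
        have : y (n + 1) = (x 0)⁻¹ * y n * x 0 := by
          rw [mul_assoc, h]; group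
        rw [this, ihy, hs, pow_succ, pow_succ']
        group
  refine ⟨key, fun htop => ?_⟩
  rw [eq_top_iff, ← htop]
  rw [Subgroup.closure_le]
  rintro g (⟨n, rfl⟩ | ⟨n, rfl⟩)
  · have mem : ∀ i ∈ ({x 0, x 1, y 0, y 1} : Set G),
        i ∈ Subgroup.closure ({x 0, x 1, y 0, y 1} : Set G) :=
      fun i hi => Subgroup.subset_closure hi
    match n, Nat.lt_or_ge n 2 with
    | 0, _ => exact Subgroup.subset_closure (by simp)
    | 1, _ => exact Subgroup.subset_closure (by simp)
    | (n+2), _ =>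
      rw [(key (n+2) (by omega)).1]
      have h0 := Subgroup.subset_closure (G := G) (k := {x 0, x 1, y 0, y 1}) (show x 0 ∈ _ by simp)
      have h1 := Subgroup.subset_closure (G := G) (k := {x 0, x 1, y 0, y 1}) (show x 1 ∈ _ by simp)
      exact mul_mem (mul_mem (pow_mem (inv_mem h0) _) h1) (pow_mem h0 _)
  · match n with
    | 0 => exact Subgroup.subset_closure (by simp)
    | 1 => exact Subgroup.subset_closure (by simp)
    | (n+2) =>
      rw [(key (n+2) (by omega)).2]
      have h0 := Subgroup.subset_closure (G := G) (k := {x 0, x 1, y 0, y 1}) (show x 0 ∈ _ by simp)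
      have h1 := Subgroup.subset_closure (G := G) (k := {x 0, x 1, y 0, y 1}) (show y 1 ∈ _ by simp)
      exact mul_mem (mul_mem (pow_mem (inv_mem h0) _) h1) (pow_mem h0 _)
end

section
/- In the group G with the infinite presentation of F_τ, the relation x_i y_i x_{i+2} = y_i x_i x_{i+1} holds for every i ≥ 0; consequently, if u is a word in generators of index at least i+3 then x_i y_i x_{i+2} u x_{i+1}^{-1} x_i^{-1} = y_i u', where u' is obtained from u by lowering all subscripts by 2. -/
/-- Evaluation of a word: each letter is `(b, n, e)` where `b` selects the
generator family (`false` for `x`, `true` for `y`), `n` is the subscript and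
`e` the (integer) exponent. -/
def weval {G : Type*} [Group G] (x y : ℕ → G) (w : List (Bool × ℕ × ℤ)) : G :=
  (w.map fun p => (if p.1 then y p.2.1 else x p.2.1) ^ p.2.2).prod

lemma weval_nil {G : Type*} [Group G] (x y : ℕ → G) : weval x y [] = 1 := rfl

lemma weval_cons {G : Type*} [Group G] (x y : ℕ → G) (p : Bool × ℕ × ℤ)
    (w : List (Bool × ℕ × ℤ)) :
    weval x y (p :: w) = (if p.1 then y p.2.1 else x p.2.1) ^ p.2.2 * weval x y w := by
  simp [weval]

lemma conj_word {G : Type*} [Group G] (x y : ℕ → G)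
    (hxx : ∀ i j, i < j → x j * x i = x i * x (j + 1))
    (hyx : ∀ i j, i < j → y j * x i = x i * y (j + 1))
    (k : ℕ) (w : List (Bool × ℕ × ℤ)) (h : ∀ p ∈ w, k + 2 ≤ p.2.1) :
    x k * weval x y w * (x k)⁻¹ =
      weval x y (w.map fun p => (p.1, p.2.1 - 1, p.2.2)) := by
  induction w with
  | nil => simp [weval_nil]
  | cons p w ih =>
    have hp : k + 2 ≤ p.2.1 := h p (by simp)
    have hm : p.2.1 - 1 + 1 = p.2.1 := by omega
    have hlet : x k * (if p.1 then y p.2.1 else x p.2.1) * (x k)⁻¹ =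
        (if p.1 then y (p.2.1 - 1) else x (p.2.1 - 1)) := by
      cases hb : p.1
      · rw [if_neg (by simp), if_neg (by simp)]
        have := hxx k (p.2.1 - 1) (by omega)
        rw [hm] at this
        rw [← this]; group
      · rw [if_pos rfl, if_pos rfl]
        have := hyx k (p.2.1 - 1) (by omega)
        rw [hm] at this
        rw [← this]; group
    have hpow : x k * (if p.1 then y p.2.1 else x p.2.1) ^ p.2.2 * (x k)⁻¹ =
        (if p.1 then y (p.2.1 - 1) else x (p.2.1 - 1)) ^ p.2.2 := by
      rw [← hlet, ← conj_zpow]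
    calc x k * weval x y (p :: w) * (x k)⁻¹
        = (x k * (if p.1 then y p.2.1 else x p.2.1) ^ p.2.2 * (x k)⁻¹) *
          (x k * weval x y w * (x k)⁻¹) := by rw [weval_cons]; group
      _ = _ := by
          rw [hpow, ih (fun q hq => h q (List.mem_cons_of_mem _ hq)), List.map_cons,
            weval_cons]

theorem stmt_13 (G : Type*) [Group G] (x y : ℕ → G)
    (hxx : ∀ i j, i < j → x j * x i = x i * x (j + 1))
    (hxy : ∀ i j, i < j → x j * y i = y i * x (j + 1))
    (hyx : ∀ i j, i < j → y j * x i = x i * y (j + 1))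
    (hyy : ∀ i j, i < j → y j * y i = y i * y (j + 1))
    (hy2 : ∀ i, y i ^ 2 = x i * x (i + 1)) :
    (∀ i, x i * y i * x (i + 2) = y i * x i * x (i + 1)) ∧
    (∀ i, ∀ w : List (Bool × ℕ × ℤ), (∀ p ∈ w, i + 3 ≤ p.2.1) →
      x i * y i * x (i + 2) * weval x y w * (x (i + 1))⁻¹ * (x i)⁻¹ =
        y i * weval x y (w.map fun p => (p.1, p.2.1 - 2, p.2.2))) := by
  have part1 : ∀ i, x i * y i * x (i + 2) = y i * x i * x (i + 1) := by
    intro i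
    have h1 : x (i + 1) * y i = y i * x (i + 2) := hxy i (i + 1) (by omega)
    calc x i * y i * x (i + 2) = x i * (y i * x (i + 2)) := by group
      _ = x i * (x (i + 1) * y i) := by rw [← h1]
      _ = (x i * x (i + 1)) * y i := by group
      _ = y i ^ 2 * y i := by rw [hy2]
      _ = y i * y i ^ 2 := by group
      _ = y i * (x i * x (i + 1)) := by rw [hy2]
      _ = y i * x i * x (i + 1) := by group
  refine ⟨part1, fun i w hw => ?_⟩
  have c1 : x (i + 1) * weval x y w * (x (i + 1))⁻¹ =
      weval x y (w.map fun p => (p.1, p.2.1 - 1, p.2.2)) :=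
    conj_word x y hxx hyx (i + 1) w (fun p hp => by have := hw p hp; omega)
  have c2 : x i * weval x y (w.map fun p => (p.1, p.2.1 - 1, p.2.2)) * (x i)⁻¹ =
      weval x y (w.map fun p => (p.1, p.2.1 - 2, p.2.2)) := by
    rw [conj_word x y hxx hyx i _ (fun p hp => by
      simp only [List.mem_map] at hp
      obtain ⟨q, hq, rfl⟩ := hp
      have := hw q hq; simp; omega), List.map_map]
    apply congrArg
    apply List.map_congr_left
    intro a _
    show (a.1, a.2.1 - 1 - 1, a.2.2) = (a.1, a.2.1 - 2, a.2.2)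
    have h2 : a.2.1 - 1 - 1 = a.2.1 - 2 := by omega
    rw [h2]
  calc x i * y i * x (i + 2) * weval x y w * (x (i + 1))⁻¹ * (x i)⁻¹
      = y i * x i * x (i + 1) * weval x y w * (x (i + 1))⁻¹ * (x i)⁻¹ := by rw [part1]
    _ = y i * (x i * (x (i + 1) * weval x y w * (x (i + 1))⁻¹) * (x i)⁻¹) := by group
    _ = y i * weval x y (w.map fun p => (p.1, p.2.1 - 2, p.2.2)) := by rw [c1, c2]
end
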